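/- Let d ≥ 1 and let D ⊂ ℝ^d be a nonempty bounded open set. Let a, b > 0 and ϱ > −d satisfy a + ϱ + b < 0. Then there exists a constant C = C(d, a, b, ϱ), independent of D, such that for all x, y ∈ D with x ≠ y: ∫_D ∫_D |y−z|^{a−d} |z−w|^{ϱ} |w−x|^{b−d} dz dw ≤ C |x−y|^{a+ϱ+b}. -/

import Mathlib

open MeasureTheory Metric

open scoped ENNReal

lemma exists_dyadic_lt {s : ℝ} (hs : 1 < s) : ∃ n : ℕ, (2:ℝ)^n < s ∧ s ≤ 2^(n+1) := by
  classical
  have hex : ∃ k : ℕ, s ≤ (2:ℝ)^k := by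
    obtain ⟨k, hk⟩ := pow_unbounded_of_one_lt s (one_lt_two (α := ℝ))
    exact ⟨k, hk.le⟩
  have hk : s ≤ (2:ℝ)^(Nat.find hex) := Nat.find_spec hex
  have hk0 : Nat.find hex ≠ 0 := by
    intro h
    rw [h] at hk; simp at hk; linarith
  obtain ⟨n, hn⟩ := Nat.exists_eq_succ_of_ne_zero hk0
  refine ⟨n, ?_, by rw [hn] at hk; exact hk⟩
  have h2 := Nat.find_min hex (m := n) (by omega)
  push_neg at h2
  exact h2

lemma exists_dyadic_le {t : ℝ} (ht : 1 ≤ t) : ∃ n : ℕ, (2:ℝ)^n ≤ t ∧ t < 2^(n+1) := by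
  classical
  have hex : ∃ k : ℕ, t < (2:ℝ)^k := pow_unbounded_of_one_lt t (one_lt_two (α := ℝ))
  have hk : t < (2:ℝ)^(Nat.find hex) := Nat.find_spec hex
  have hk0 : Nat.find hex ≠ 0 := by
    intro h
    rw [h] at hk; simp at hk; linarith
  obtain ⟨n, hn⟩ := Nat.exists_eq_succ_of_ne_zero hk0
  refine ⟨n, ?_, by rw [hn] at hk; exact hk⟩
  have h2 := Nat.find_min hex (m := n) (by omega)
  push_neg at h2
  exact h2

lemma rpow_div_pow_aux (m : ℕ) (c : ℝ) {R : ℝ} (hR : 0 < R) :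
    (R / 2^m) ^ c = R ^ c * (2:ℝ) ^ (-(m:ℝ) * c) := by
  have h1 : (R / 2^m) = R * (2:ℝ) ^ (-(m:ℝ)) := by
    rw [Real.rpow_neg two_pos.le, Real.rpow_natCast]; ring
  rw [h1, Real.mul_rpow hR.le (Real.rpow_nonneg two_pos.le _), ← Real.rpow_mul two_pos.le]

lemma rpow_mul_pow_aux (m : ℕ) (c : ℝ) {R : ℝ} (hR : 0 < R) :
    (R * 2^m) ^ c = R ^ c * (2:ℝ) ^ ((m:ℝ) * c) := by
  have h1 : (R * (2:ℝ)^m) = R * (2:ℝ) ^ ((m:ℝ)) := by rw [Real.rpow_natCast]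
  rw [h1, Real.mul_rpow hR.le (Real.rpow_nonneg two_pos.le _), ← Real.rpow_mul two_pos.le]

lemma ball_term_calc {R α : ℝ} (hR : 0 < R) (d n : ℕ) :
    (R / 2^(n+1)) ^ α * (R / 2^n) ^ (d:ℕ) =
      (2:ℝ)^(-α) * ((2:ℝ)^(-(α+(d:ℝ))))^n * R ^ (α + (d:ℝ)) := by
  have h4 : ((2:ℝ)^(-(α+(d:ℝ))))^n = (2:ℝ)^((-(α+(d:ℝ)))*(n:ℝ)) := by
    rw [← Real.rpow_natCast ((2:ℝ)^(-(α+(d:ℝ)))) n, ← Real.rpow_mul two_pos.le]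
  rw [← Real.rpow_natCast (R / 2^n) d, rpow_div_pow_aux n (d:ℝ) hR,
    rpow_div_pow_aux (n+1) α hR, h4]
  rw [show R ^ α * (2:ℝ) ^ (-((n+1:ℕ):ℝ) * α) * (R ^ (d:ℝ) * (2:ℝ) ^ (-(n:ℝ) * (d:ℝ)))
      = (R ^ α * R ^ (d:ℝ)) * ((2:ℝ) ^ (-((n+1:ℕ):ℝ) * α) * (2:ℝ) ^ (-(n:ℝ) * (d:ℝ))) from by ring,
    ← Real.rpow_add hR, ← Real.rpow_add two_pos,
    show (2:ℝ)^(-α) * (2:ℝ)^((-(α+(d:ℝ)))*(n:ℝ)) * R ^ (α + (d:ℝ))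
      = R ^ (α + (d:ℝ)) * ((2:ℝ)^(-α) * (2:ℝ)^((-(α+(d:ℝ)))*(n:ℝ))) from by ring,
    ← Real.rpow_add two_pos]
  congr 1
  push_cast
  ring

lemma ext_term_calc {R γ : ℝ} (hR : 0 < R) (d n : ℕ) :
    (R * 2^n) ^ γ * (R * 2^(n+1)) ^ (d:ℕ) =
      (2:ℝ)^((d:ℝ)) * ((2:ℝ)^(γ+(d:ℝ)))^n * R ^ (γ + (d:ℝ)) := by
  have h4 : ((2:ℝ)^(γ+(d:ℝ)))^n = (2:ℝ)^((γ+(d:ℝ))*(n:ℝ)) := by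
    rw [← Real.rpow_natCast ((2:ℝ)^(γ+(d:ℝ))) n, ← Real.rpow_mul two_pos.le]
  rw [← Real.rpow_natCast (R * 2^(n+1)) d, rpow_mul_pow_aux (n+1) (d:ℝ) hR,
    rpow_mul_pow_aux n γ hR, h4]
  rw [show R ^ γ * (2:ℝ) ^ ((n:ℝ) * γ) * (R ^ (d:ℝ) * (2:ℝ) ^ (((n+1:ℕ):ℝ) * (d:ℝ)))
      = (R ^ γ * R ^ (d:ℝ)) * ((2:ℝ) ^ ((n:ℝ) * γ) * (2:ℝ) ^ (((n+1:ℕ):ℝ) * (d:ℝ))) from by ring,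
    ← Real.rpow_add hR, ← Real.rpow_add two_pos,
    show (2:ℝ)^((d:ℝ)) * (2:ℝ)^((γ+(d:ℝ))*(n:ℝ)) * R ^ (γ + (d:ℝ))
      = R ^ (γ + (d:ℝ)) * ((2:ℝ)^((d:ℝ)) * (2:ℝ)^((γ+(d:ℝ))*(n:ℝ))) from by ring,
    ← Real.rpow_add two_pos]
  congr 1
  push_cast
  ring

lemma lintegral_ball_rpow (d : ℕ) (hd : 1 ≤ d) (α : ℝ) (hα₁ : -(d:ℝ) < α) (hα₂ : α < 0) :
    ∃ K : ℝ≥0∞, K ≠ ∞ ∧ ∀ R : ℝ, 0 < R →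
      (∫⁻ z in ball (0 : EuclideanSpace ℝ (Fin d)) R, ENNReal.ofReal (‖z‖ ^ α))
        ≤ K * ENNReal.ofReal (R ^ (α + (d:ℝ))) := by
  haveI : Nonempty (Fin d) := ⟨⟨0, hd⟩⟩
  set vB : ℝ≥0∞ := volume (ball (0 : EuclideanSpace ℝ (Fin d)) 1) with hvB
  have hvBfin : vB ≠ ∞ := measure_ball_lt_top.ne
  set q : ℝ≥0∞ := ENNReal.ofReal ((2:ℝ) ^ (-(α + (d:ℝ)))) with hq
  have hq1 : q < 1 := by
    rw [hq, ENNReal.ofReal_lt_one]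
    exact Real.rpow_lt_one_of_one_lt_of_neg one_lt_two (by linarith)
  refine ⟨ENNReal.ofReal ((2:ℝ) ^ (-α)) * vB * (1 - q)⁻¹, ?_, ?_⟩
  · exact ENNReal.mul_ne_top (ENNReal.mul_ne_top ENNReal.ofReal_ne_top hvBfin)
      (ENNReal.inv_ne_top.2 (tsub_pos_of_lt hq1).ne')
  intro R hR
  set S : ℕ → Set (EuclideanSpace ℝ (Fin d)) :=
    fun n => ball 0 (R / 2^n) \ ball 0 (R / 2^(n+1)) with hS
  have hcover : ball (0 : EuclideanSpace ℝ (Fin d)) R ⊆ (⋃ n, S n) ∪ {0} := by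
    intro z hz
    rcases eq_or_ne z 0 with rfl | hz0
    · exact Or.inr rfl
    left
    have hzn : 0 < ‖z‖ := norm_pos_iff.2 hz0
    have hzR : ‖z‖ < R := mem_ball_zero_iff.1 hz
    obtain ⟨n, h1, h2'⟩ := exists_dyadic_lt (s := R / ‖z‖) ((one_lt_div hzn).2 hzR)
    rw [lt_div_iff₀ hzn] at h1
    rw [div_le_iff₀ hzn] at h2'
    refine Set.mem_iUnion.2 ⟨n, ?_, ?_⟩
    · exact mem_ball_zero_iff.2 (by rw [lt_div_iff₀ (by positivity)]; linarith)
    · intro hmem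
      have := mem_ball_zero_iff.1 hmem
      rw [lt_div_iff₀ (by positivity)] at this
      linarith
  have hterm : ∀ n : ℕ, (∫⁻ z in S n, ENNReal.ofReal (‖z‖ ^ α))
      ≤ (ENNReal.ofReal ((2:ℝ)^(-α)) * vB * q ^ n) * ENNReal.ofReal (R ^ (α + (d:ℝ))) := by
    intro n
    have hr1 : (0:ℝ) < R / 2^(n+1) := by positivity
    have hr0 : (0:ℝ) < R / 2^n := by positivity
    calc (∫⁻ z in S n, ENNReal.ofReal (‖z‖ ^ α))
        ≤ ∫⁻ _z in S n, ENNReal.ofReal ((R / 2^(n+1)) ^ α) := by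
          refine setLIntegral_mono' (measurableSet_ball.diff measurableSet_ball) ?_
          intro z hz
          refine ENNReal.ofReal_le_ofReal ?_
          refine Real.rpow_le_rpow_of_nonpos hr1 ?_ hα₂.le
          by_contra hcon
          push_neg at hcon
          exact hz.2 (mem_ball_zero_iff.2 hcon)
      _ = ENNReal.ofReal ((R / 2^(n+1)) ^ α) * volume (S n) := setLIntegral_const _ _
      _ ≤ ENNReal.ofReal ((R / 2^(n+1)) ^ α)
            * volume (ball (0 : EuclideanSpace ℝ (Fin d)) (R / 2^n)) := by
          exact mul_le_mul_right (measure_mono Set.diff_subset) _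
      _ = ENNReal.ofReal ((R / 2^(n+1)) ^ α) * (ENNReal.ofReal ((R / 2^n) ^ (d:ℕ)) * vB) := by
          rw [Measure.addHaar_ball volume _ hr0.le, finrank_euclideanSpace_fin]
      _ = (ENNReal.ofReal ((2:ℝ)^(-α)) * vB * q ^ n) * ENNReal.ofReal (R ^ (α + (d:ℝ))) := by
          rw [← mul_assoc, ← ENNReal.ofReal_mul (Real.rpow_nonneg hr1.le _),
            ball_term_calc hR d n]
          rw [hq, ← ENNReal.ofReal_pow (Real.rpow_nonneg two_pos.le _),
            ENNReal.ofReal_mul (by positivity), ENNReal.ofReal_mul (by positivity)]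
          ring
  calc (∫⁻ z in ball (0 : EuclideanSpace ℝ (Fin d)) R, ENNReal.ofReal (‖z‖ ^ α))
      ≤ ∫⁻ z in (⋃ n, S n) ∪ {0}, ENNReal.ofReal (‖z‖ ^ α) := lintegral_mono_set hcover
    _ ≤ (∫⁻ z in ⋃ n, S n, ENNReal.ofReal (‖z‖ ^ α))
          + ∫⁻ z in ({0} : Set (EuclideanSpace ℝ (Fin d))), ENNReal.ofReal (‖z‖ ^ α) :=
        lintegral_union_le _ _ _
    _ = ∫⁻ z in ⋃ n, S n, ENNReal.ofReal (‖z‖ ^ α) := by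
        rw [setLIntegral_measure_zero _ _ (measure_singleton 0), add_zero]
    _ ≤ ∑' n, ∫⁻ z in S n, ENNReal.ofReal (‖z‖ ^ α) := lintegral_iUnion_le _ _
    _ ≤ ∑' n, (ENNReal.ofReal ((2:ℝ)^(-α)) * vB * q ^ n) * ENNReal.ofReal (R ^ (α + (d:ℝ))) :=
        ENNReal.tsum_le_tsum hterm
    _ = (ENNReal.ofReal ((2:ℝ)^(-α)) * vB * (1 - q)⁻¹) * ENNReal.ofReal (R ^ (α + (d:ℝ))) := by
        rw [ENNReal.tsum_mul_right]
        congr 1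
        rw [ENNReal.tsum_mul_left, ENNReal.tsum_geometric]

lemma lintegral_compl_ball_rpow (d : ℕ) (hd : 1 ≤ d) (γ : ℝ) (hγ : γ + (d:ℝ) < 0) :
    ∃ K : ℝ≥0∞, K ≠ ∞ ∧ ∀ R : ℝ, 0 < R →
      (∫⁻ z in (ball (0 : EuclideanSpace ℝ (Fin d)) R)ᶜ, ENNReal.ofReal (‖z‖ ^ γ))
        ≤ K * ENNReal.ofReal (R ^ (γ + (d:ℝ))) := by
  haveI : Nonempty (Fin d) := ⟨⟨0, hd⟩⟩
  have hγ0 : γ < 0 := by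
    have : (0:ℝ) ≤ d := Nat.cast_nonneg d
    linarith
  set vB : ℝ≥0∞ := volume (ball (0 : EuclideanSpace ℝ (Fin d)) 1) with hvB
  have hvBfin : vB ≠ ∞ := measure_ball_lt_top.ne
  set q : ℝ≥0∞ := ENNReal.ofReal ((2:ℝ) ^ (γ + (d:ℝ))) with hq
  have hq1 : q < 1 := by
    rw [hq, ENNReal.ofReal_lt_one]
    exact Real.rpow_lt_one_of_one_lt_of_neg one_lt_two hγ
  refine ⟨ENNReal.ofReal ((2:ℝ) ^ ((d:ℝ))) * vB * (1 - q)⁻¹, ?_, ?_⟩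
  · exact ENNReal.mul_ne_top (ENNReal.mul_ne_top ENNReal.ofReal_ne_top hvBfin)
      (ENNReal.inv_ne_top.2 (tsub_pos_of_lt hq1).ne')
  intro R hR
  set T : ℕ → Set (EuclideanSpace ℝ (Fin d)) :=
    fun n => ball 0 (R * 2^(n+1)) \ ball 0 (R * 2^n) with hT
  have hcover : (ball (0 : EuclideanSpace ℝ (Fin d)) R)ᶜ ⊆ ⋃ n, T n := by
    intro z hz
    have hzR : R ≤ ‖z‖ := by
      by_contra hcon
      push_neg at hcon
      exact hz (mem_ball_zero_iff.2 hcon)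
    have hzn : 0 < ‖z‖ := lt_of_lt_of_le hR hzR
    obtain ⟨n, h1, h2'⟩ := exists_dyadic_le (t := ‖z‖ / R) ((one_le_div hR).2 hzR)
    rw [le_div_iff₀ hR] at h1
    rw [div_lt_iff₀ hR] at h2'
    refine Set.mem_iUnion.2 ⟨n, ?_, ?_⟩
    · exact mem_ball_zero_iff.2 (by linarith)
    · intro hmem
      have := mem_ball_zero_iff.1 hmem
      linarith
  have hterm : ∀ n : ℕ, (∫⁻ z in T n, ENNReal.ofReal (‖z‖ ^ γ))
      ≤ (ENNReal.ofReal ((2:ℝ)^((d:ℝ))) * vB * q ^ n) * ENNReal.ofReal (R ^ (γ + (d:ℝ))) := by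
    intro n
    have hr1 : (0:ℝ) < R * 2^n := by positivity
    have hr0 : (0:ℝ) < R * 2^(n+1) := by positivity
    calc (∫⁻ z in T n, ENNReal.ofReal (‖z‖ ^ γ))
        ≤ ∫⁻ _z in T n, ENNReal.ofReal ((R * 2^n) ^ γ) := by
          refine setLIntegral_mono' (measurableSet_ball.diff measurableSet_ball) ?_
          intro z hz
          refine ENNReal.ofReal_le_ofReal ?_
          refine Real.rpow_le_rpow_of_nonpos hr1 ?_ hγ0.le
          by_contra hcon
          push_neg at hcon
          exact hz.2 (mem_ball_zero_iff.2 hcon)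
      _ = ENNReal.ofReal ((R * 2^n) ^ γ) * volume (T n) := setLIntegral_const _ _
      _ ≤ ENNReal.ofReal ((R * 2^n) ^ γ)
            * volume (ball (0 : EuclideanSpace ℝ (Fin d)) (R * 2^(n+1))) := by
          exact mul_le_mul_right (measure_mono Set.diff_subset) _
      _ = ENNReal.ofReal ((R * 2^n) ^ γ) * (ENNReal.ofReal ((R * 2^(n+1)) ^ (d:ℕ)) * vB) := by
          rw [Measure.addHaar_ball volume _ hr0.le, finrank_euclideanSpace_fin]
      _ = (ENNReal.ofReal ((2:ℝ)^((d:ℝ))) * vB * q ^ n) * ENNReal.ofReal (R ^ (γ + (d:ℝ))) := by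
          rw [← mul_assoc, ← ENNReal.ofReal_mul (Real.rpow_nonneg hr1.le _),
            ext_term_calc hR d n]
          rw [hq, ← ENNReal.ofReal_pow (Real.rpow_nonneg two_pos.le _),
            ENNReal.ofReal_mul (by positivity), ENNReal.ofReal_mul (by positivity)]
          ring
  calc (∫⁻ z in (ball (0 : EuclideanSpace ℝ (Fin d)) R)ᶜ, ENNReal.ofReal (‖z‖ ^ γ))
      ≤ ∫⁻ z in ⋃ n, T n, ENNReal.ofReal (‖z‖ ^ γ) := lintegral_mono_set hcover
    _ ≤ ∑' n, ∫⁻ z in T n, ENNReal.ofReal (‖z‖ ^ γ) := lintegral_iUnion_le _ _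
    _ ≤ ∑' n, (ENNReal.ofReal ((2:ℝ)^((d:ℝ))) * vB * q ^ n) * ENNReal.ofReal (R ^ (γ + (d:ℝ))) :=
        ENNReal.tsum_le_tsum hterm
    _ = (ENNReal.ofReal ((2:ℝ)^((d:ℝ))) * vB * (1 - q)⁻¹) * ENNReal.ofReal (R ^ (γ + (d:ℝ))) := by
        rw [ENNReal.tsum_mul_right]
        congr 1
        rw [ENNReal.tsum_mul_left, ENNReal.tsum_geometric]

lemma my_setLIntegral_sub_left {d : ℕ} (u : EuclideanSpace ℝ (Fin d))
    (g : EuclideanSpace ℝ (Fin d) → ℝ≥0∞) (s : Set (EuclideanSpace ℝ (Fin d))) :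
    ∫⁻ z in (fun z => u - z) ⁻¹' s, g (u - z) = ∫⁻ z in s, g z :=
  (MeasureTheory.Measure.measurePreserving_sub_left volume u).setLIntegral_comp_preimage_emb
    (Homeomorph.subLeft u).measurableEmbedding _ _

lemma riesz_comp (d : ℕ) (hd : 1 ≤ d) (α β : ℝ) (hα₁ : -(d:ℝ) < α) (hα₂ : α < 0)
    (hβ₁ : -(d:ℝ) < β) (hβ₂ : β < 0) (hσ : α + β + (d:ℝ) < 0) :
    ∃ K : ℝ≥0∞, K ≠ ∞ ∧ ∀ u v : EuclideanSpace ℝ (Fin d), u ≠ v →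
      (∫⁻ z, ENNReal.ofReal (‖u - z‖ ^ α * ‖z - v‖ ^ β))
        ≤ K * ENNReal.ofReal (‖u - v‖ ^ (α + β + (d:ℝ))) := by
  obtain ⟨Ka, hKa, hKaB⟩ := lintegral_ball_rpow d hd α hα₁ hα₂
  obtain ⟨Kb, hKb, hKbB⟩ := lintegral_ball_rpow d hd β hβ₁ hβ₂
  obtain ⟨Ke, hKe, hKeB⟩ := lintegral_compl_ball_rpow d hd (α + β) (by linarith)
  set σ := α + β + (d:ℝ) with hσdef
  refine ⟨(Ka + Kb + ENNReal.ofReal ((4:ℝ)^(-β)) * Ke) * ENNReal.ofReal ((2:ℝ)^(-σ)), ?_, ?_⟩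
  · exact ENNReal.mul_ne_top (by
      refine ENNReal.add_ne_top.2 ⟨ENNReal.add_ne_top.2 ⟨hKa, hKb⟩, ?_⟩
      exact ENNReal.mul_ne_top ENNReal.ofReal_ne_top hKe) ENNReal.ofReal_ne_top
  intro u v huv
  set r := ‖u - v‖ with hrdef
  have hr0 : 0 < r := norm_pos_iff.2 (sub_ne_zero.2 huv)
  have hr2 : 0 < r/2 := by positivity
  set A := ball u (r/2) with hA
  set B := ball v (r/2) with hB
  have hhalf : ((r/2) : ℝ)^σ = r^σ * (2:ℝ)^(-σ) := by
    have h := rpow_div_pow_aux 1 σ hr0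
    simpa using h
  -- pointwise distances
  have hduv : dist u v = r := by rw [dist_eq_norm]
  -- translation identities
  have hpreA : (fun z : EuclideanSpace ℝ (Fin d) => u - z) ⁻¹' (ball 0 (r/2)) = A := by
    ext z
    simp only [Set.mem_preimage, mem_ball_zero_iff, hA, mem_ball, dist_eq_norm,
      sub_zero, norm_sub_rev u z]
  have hpreB : (fun z : EuclideanSpace ℝ (Fin d) => v - z) ⁻¹' (ball 0 (r/2)) = B := by
    ext z
    simp only [Set.mem_preimage, mem_ball_zero_iff, hB, mem_ball, dist_eq_norm,
      sub_zero, norm_sub_rev v z]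
  have htransA : (∫⁻ z in A, ENNReal.ofReal (‖u - z‖ ^ α))
      = ∫⁻ z in ball (0 : EuclideanSpace ℝ (Fin d)) (r/2), ENNReal.ofReal (‖z‖ ^ α) := by
    rw [← hpreA]
    exact my_setLIntegral_sub_left u (fun z => ENNReal.ofReal (‖z‖ ^ α)) _
  have htransB : (∫⁻ z in B, ENNReal.ofReal (‖v - z‖ ^ β))
      = ∫⁻ z in ball (0 : EuclideanSpace ℝ (Fin d)) (r/2), ENNReal.ofReal (‖z‖ ^ β) := by
    rw [← hpreB]
    exact my_setLIntegral_sub_left v (fun z => ENNReal.ofReal (‖z‖ ^ β)) _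
  have htransAc : (∫⁻ z in Aᶜ, ENNReal.ofReal (‖u - z‖ ^ (α + β)))
      = ∫⁻ z in (ball (0 : EuclideanSpace ℝ (Fin d)) (r/2))ᶜ, ENNReal.ofReal (‖z‖ ^ (α + β)) := by
    rw [← hpreA, ← Set.preimage_compl]
    exact my_setLIntegral_sub_left u (fun z => ENNReal.ofReal (‖z‖ ^ (α + β))) _
  -- bound on A
  have hboundA : (∫⁻ z in A, ENNReal.ofReal (‖u - z‖ ^ α * ‖z - v‖ ^ β))
      ≤ Ka * ENNReal.ofReal ((r/2) ^ σ) := by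
    calc (∫⁻ z in A, ENNReal.ofReal (‖u - z‖ ^ α * ‖z - v‖ ^ β))
        ≤ ∫⁻ z in A, ENNReal.ofReal ((r/2)^β) * ENNReal.ofReal (‖u - z‖ ^ α) := by
          refine setLIntegral_mono' measurableSet_ball ?_
          intro z hz
          rw [← ENNReal.ofReal_mul (Real.rpow_nonneg (by positivity) _), mul_comm ((r/2)^β)]
          refine ENNReal.ofReal_le_ofReal ?_
          refine mul_le_mul_of_nonneg_left ?_ (Real.rpow_nonneg (norm_nonneg _) _)
          refine Real.rpow_le_rpow_of_nonpos hr2 ?_ hβ₂.le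
          have h1 : ‖z - u‖ < r/2 := by
            have := mem_ball.1 hz; rwa [dist_eq_norm] at this
          have h2 : r ≤ ‖z - u‖ + ‖z - v‖ := by
            have h := dist_triangle u z v
            rwa [hduv, dist_comm u z, dist_eq_norm, dist_eq_norm] at h
          linarith
      _ = ENNReal.ofReal ((r/2)^β) * ∫⁻ z in A, ENNReal.ofReal (‖u - z‖ ^ α) :=
          lintegral_const_mul' _ _ ENNReal.ofReal_ne_top
      _ ≤ ENNReal.ofReal ((r/2)^β) * (Ka * ENNReal.ofReal ((r/2) ^ (α + (d:ℝ)))) := by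
          rw [htransA]
          exact mul_le_mul_right (hKaB (r/2) hr2) _
      _ = Ka * ENNReal.ofReal ((r/2) ^ σ) := by
          rw [← mul_assoc, mul_comm (ENNReal.ofReal ((r/2)^β)) Ka, mul_assoc,
            ← ENNReal.ofReal_mul (Real.rpow_nonneg hr2.le _), ← Real.rpow_add hr2]
          congr 2
          rw [hσdef]; ring
  -- bound on B
  have hboundB : (∫⁻ z in B, ENNReal.ofReal (‖u - z‖ ^ α * ‖z - v‖ ^ β))
      ≤ Kb * ENNReal.ofReal ((r/2) ^ σ) := by
    calc (∫⁻ z in B, ENNReal.ofReal (‖u - z‖ ^ α * ‖z - v‖ ^ β))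
        ≤ ∫⁻ z in B, ENNReal.ofReal ((r/2)^α) * ENNReal.ofReal (‖v - z‖ ^ β) := by
          refine setLIntegral_mono' measurableSet_ball ?_
          intro z hz
          rw [← ENNReal.ofReal_mul (Real.rpow_nonneg (by positivity) _)]
          refine ENNReal.ofReal_le_ofReal ?_
          rw [norm_sub_rev z v]
          refine mul_le_mul_of_nonneg_right ?_ (Real.rpow_nonneg (norm_nonneg _) _)
          refine Real.rpow_le_rpow_of_nonpos hr2 ?_ hα₂.le
          have h1 : ‖z - v‖ < r/2 := by
            have := mem_ball.1 hz; rwa [dist_eq_norm] at this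
          have h2 : r ≤ ‖u - z‖ + ‖z - v‖ := by
            have h := dist_triangle u z v
            rwa [hduv, dist_eq_norm, dist_eq_norm] at h
          linarith
      _ = ENNReal.ofReal ((r/2)^α) * ∫⁻ z in B, ENNReal.ofReal (‖v - z‖ ^ β) :=
          lintegral_const_mul' _ _ ENNReal.ofReal_ne_top
      _ ≤ ENNReal.ofReal ((r/2)^α) * (Kb * ENNReal.ofReal ((r/2) ^ (β + (d:ℝ)))) := by
          rw [htransB]
          exact mul_le_mul_right (hKbB (r/2) hr2) _
      _ = Kb * ENNReal.ofReal ((r/2) ^ σ) := by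
          rw [← mul_assoc, mul_comm (ENNReal.ofReal ((r/2)^α)) Kb, mul_assoc,
            ← ENNReal.ofReal_mul (Real.rpow_nonneg hr2.le _), ← Real.rpow_add hr2]
          congr 2
          rw [hσdef]; ring
  -- bound on the complement
  have hboundC : (∫⁻ z in (A ∪ B)ᶜ, ENNReal.ofReal (‖u - z‖ ^ α * ‖z - v‖ ^ β))
      ≤ ENNReal.ofReal ((4:ℝ)^(-β)) * Ke * ENNReal.ofReal ((r/2) ^ σ) := by
    have hpt : ∀ z ∈ (A ∪ B)ᶜ, ENNReal.ofReal (‖u - z‖ ^ α * ‖z - v‖ ^ β)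
        ≤ ENNReal.ofReal ((4:ℝ)^(-β)) * ENNReal.ofReal (‖u - z‖ ^ (α + β)) := by
      intro z hz
      rw [Set.mem_compl_iff, Set.mem_union] at hz
      push_neg at hz
      have hzu : r/2 ≤ ‖u - z‖ := by
        have := hz.1
        rw [hA, mem_ball, dist_eq_norm, norm_sub_rev z u] at this
        linarith [not_lt.1 this]
      have hzv : r/2 ≤ ‖z - v‖ := by
        have := hz.2
        rw [hB, mem_ball, dist_eq_norm] at this
        linarith [not_lt.1 this]
      have huz0 : (0:ℝ) < ‖u - z‖ := lt_of_lt_of_le hr2 hzu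
      have hq4 : ‖u - z‖/4 ≤ ‖z - v‖ := by
        rcases le_or_gt (‖u - z‖) (2*r) with h | h
        · linarith
        · have h2 : dist u z ≤ dist u v + dist v z := dist_triangle u v z
          rw [hduv, dist_eq_norm, dist_eq_norm, norm_sub_rev v z] at h2
          linarith
      have h4 : ‖z - v‖ ^ β ≤ ‖u - z‖ ^ β * (4:ℝ)^(-β) := by
        have h5 : ‖z - v‖ ^ β ≤ (‖u - z‖/4) ^ β :=
          Real.rpow_le_rpow_of_nonpos (by positivity) hq4 hβ₂.le
        have h6 : (‖u - z‖/4 : ℝ) ^ β = ‖u - z‖ ^ β * (4:ℝ)^(-β) := by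
          rw [Real.div_rpow (norm_nonneg _) (by norm_num : (0:ℝ) ≤ 4),
            Real.rpow_neg (by norm_num : (0:ℝ) ≤ 4), div_eq_mul_inv]
        rw [← h6]; exact h5
      calc ENNReal.ofReal (‖u - z‖ ^ α * ‖z - v‖ ^ β)
          ≤ ENNReal.ofReal (‖u - z‖ ^ α * (‖u - z‖ ^ β * (4:ℝ)^(-β))) := by
            refine ENNReal.ofReal_le_ofReal ?_
            exact mul_le_mul_of_nonneg_left h4 (Real.rpow_nonneg (norm_nonneg _) _)
        _ = ENNReal.ofReal ((4:ℝ)^(-β)) * ENNReal.ofReal (‖u - z‖ ^ (α + β)) := by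
            rw [← ENNReal.ofReal_mul (by positivity)]
            rw [Real.rpow_add huz0]
            ring
    calc (∫⁻ z in (A ∪ B)ᶜ, ENNReal.ofReal (‖u - z‖ ^ α * ‖z - v‖ ^ β))
        ≤ ∫⁻ z in (A ∪ B)ᶜ,
            ENNReal.ofReal ((4:ℝ)^(-β)) * ENNReal.ofReal (‖u - z‖ ^ (α + β)) :=
          setLIntegral_mono' (measurableSet_ball.union measurableSet_ball).compl hpt
      _ ≤ ∫⁻ z in Aᶜ,
            ENNReal.ofReal ((4:ℝ)^(-β)) * ENNReal.ofReal (‖u - z‖ ^ (α + β)) :=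
          lintegral_mono_set (Set.compl_subset_compl.2 Set.subset_union_left)
      _ = ENNReal.ofReal ((4:ℝ)^(-β)) * ∫⁻ z in Aᶜ, ENNReal.ofReal (‖u - z‖ ^ (α + β)) :=
          lintegral_const_mul' _ _ ENNReal.ofReal_ne_top
      _ ≤ ENNReal.ofReal ((4:ℝ)^(-β)) * (Ke * ENNReal.ofReal ((r/2) ^ (α + β + (d:ℝ)))) := by
          rw [htransAc]
          exact mul_le_mul_right (hKeB (r/2) hr2) _
      _ = ENNReal.ofReal ((4:ℝ)^(-β)) * Ke * ENNReal.ofReal ((r/2) ^ σ) := by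
          rw [mul_assoc]
  -- combine
  calc (∫⁻ z, ENNReal.ofReal (‖u - z‖ ^ α * ‖z - v‖ ^ β))
      = ∫⁻ z in (A ∪ B) ∪ (A ∪ B)ᶜ, ENNReal.ofReal (‖u - z‖ ^ α * ‖z - v‖ ^ β) := by
        rw [Set.union_compl_self, setLIntegral_univ]
    _ ≤ (∫⁻ z in A ∪ B, ENNReal.ofReal (‖u - z‖ ^ α * ‖z - v‖ ^ β))
          + ∫⁻ z in (A ∪ B)ᶜ, ENNReal.ofReal (‖u - z‖ ^ α * ‖z - v‖ ^ β) :=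
        lintegral_union_le _ _ _
    _ ≤ ((∫⁻ z in A, ENNReal.ofReal (‖u - z‖ ^ α * ‖z - v‖ ^ β))
          + ∫⁻ z in B, ENNReal.ofReal (‖u - z‖ ^ α * ‖z - v‖ ^ β))
          + ∫⁻ z in (A ∪ B)ᶜ, ENNReal.ofReal (‖u - z‖ ^ α * ‖z - v‖ ^ β) :=
        add_le_add_left (lintegral_union_le _ _ _) _
    _ ≤ (Ka * ENNReal.ofReal ((r/2) ^ σ) + Kb * ENNReal.ofReal ((r/2) ^ σ))
          + ENNReal.ofReal ((4:ℝ)^(-β)) * Ke * ENNReal.ofReal ((r/2) ^ σ) :=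
        add_le_add (add_le_add hboundA hboundB) hboundC
    _ = (Ka + Kb + ENNReal.ofReal ((4:ℝ)^(-β)) * Ke) * ENNReal.ofReal ((r/2) ^ σ) := by
        ring
    _ = (Ka + Kb + ENNReal.ofReal ((4:ℝ)^(-β)) * Ke) * ENNReal.ofReal ((2:ℝ)^(-σ))
          * ENNReal.ofReal (r ^ σ) := by
        rw [hhalf, ENNReal.ofReal_mul (Real.rpow_nonneg hr0.le _)]
        ring

/-- Lemma (Riesz-type double integral, case `a + ϱ + b < 0`): for `d ≥ 1`, `a, b > 0`,
`ϱ > -d` with `a + ϱ + b < 0`, there is a constant `C = C(d,a,b,ϱ)`, independent of the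
nonempty bounded open set `D ⊂ ℝ^d`, such that for all `x ≠ y` in `D`,
`∫_D ∫_D |y-z|^{a-d} |z-w|^ϱ |w-x|^{b-d} dz dw ≤ C |x-y|^{a+ϱ+b}`. -/
theorem double_riesz_integral_neg (d : ℕ) (hd : 1 ≤ d) (a b ϱ : ℝ)
    (ha : 0 < a) (hb : 0 < b) (hϱ : -(d : ℝ) < ϱ) (hsum : a + ϱ + b < 0) :
    ∃ C : ℝ, 0 < C ∧
      ∀ D : Set (EuclideanSpace ℝ (Fin d)), D.Nonempty → IsOpen D →
        Bornology.IsBounded D →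
        ∀ x ∈ D, ∀ y ∈ D, x ≠ y →
          (∫⁻ w in D, ∫⁻ z in D,
              ENNReal.ofReal (‖y - z‖ ^ (a - (d : ℝ)) * ‖z - w‖ ^ ϱ *
                ‖w - x‖ ^ (b - (d : ℝ)))) ≤
            ENNReal.ofReal (C * ‖x - y‖ ^ (a + ϱ + b)) := by
  haveI : Nonempty (Fin d) := ⟨⟨0, hd⟩⟩
  have hd' : (1:ℝ) ≤ d := by exact_mod_cast hd
  obtain ⟨K1, hK1, hK1B⟩ := riesz_comp d hd (a - (d:ℝ)) ϱ (by linarith) (by linarith)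
    (by linarith) (by linarith) (by linarith)
  obtain ⟨K2, hK2, hK2B⟩ := riesz_comp d hd (a + ϱ) (b - (d:ℝ)) (by linarith) (by linarith)
    (by linarith) (by linarith) (by linarith)
  have he1 : (a - (d:ℝ)) + ϱ + (d:ℝ) = a + ϱ := by ring
  have he2 : (a + ϱ) + (b - (d:ℝ)) + (d:ℝ) = a + ϱ + b := by ring
  rw [he1] at hK1B
  rw [he2] at hK2B
  have hfin : K1 * K2 ≠ ∞ := ENNReal.mul_ne_top hK1 hK2
  refine ⟨(K1 * K2).toReal + 1, by positivity, ?_⟩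
  intro D _hne _hopen _hbdd x hx y hy hxy
  have hinner : ∀ w : EuclideanSpace ℝ (Fin d), w ≠ y →
      (∫⁻ z in D, ENNReal.ofReal (‖y - z‖ ^ (a - (d:ℝ)) * ‖z - w‖ ^ ϱ *
          ‖w - x‖ ^ (b - (d:ℝ))))
        ≤ K1 * ENNReal.ofReal (‖y - w‖ ^ (a + ϱ) * ‖w - x‖ ^ (b - (d:ℝ))) := by
    intro w hw
    have hsplit : ∀ z : EuclideanSpace ℝ (Fin d),
        ENNReal.ofReal (‖y - z‖ ^ (a - (d:ℝ)) * ‖z - w‖ ^ ϱ * ‖w - x‖ ^ (b - (d:ℝ)))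
        = ENNReal.ofReal (‖w - x‖ ^ (b - (d:ℝ)))
            * ENNReal.ofReal (‖y - z‖ ^ (a - (d:ℝ)) * ‖z - w‖ ^ ϱ) := by
      intro z
      rw [← ENNReal.ofReal_mul (Real.rpow_nonneg (norm_nonneg _) _)]
      congr 1
      ring
    calc (∫⁻ z in D, ENNReal.ofReal (‖y - z‖ ^ (a - (d:ℝ)) * ‖z - w‖ ^ ϱ *
            ‖w - x‖ ^ (b - (d:ℝ))))
        = ∫⁻ z in D, ENNReal.ofReal (‖w - x‖ ^ (b - (d:ℝ)))
            * ENNReal.ofReal (‖y - z‖ ^ (a - (d:ℝ)) * ‖z - w‖ ^ ϱ) := by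
          simp_rw [hsplit]
      _ = ENNReal.ofReal (‖w - x‖ ^ (b - (d:ℝ)))
            * ∫⁻ z in D, ENNReal.ofReal (‖y - z‖ ^ (a - (d:ℝ)) * ‖z - w‖ ^ ϱ) :=
          lintegral_const_mul' _ _ ENNReal.ofReal_ne_top
      _ ≤ ENNReal.ofReal (‖w - x‖ ^ (b - (d:ℝ)))
            * ∫⁻ z, ENNReal.ofReal (‖y - z‖ ^ (a - (d:ℝ)) * ‖z - w‖ ^ ϱ) :=
          mul_le_mul_right (lintegral_mono' Measure.restrict_le_self le_rfl) _
      _ ≤ ENNReal.ofReal (‖w - x‖ ^ (b - (d:ℝ)))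
            * (K1 * ENNReal.ofReal (‖y - w‖ ^ (a + ϱ))) :=
          mul_le_mul_right (hK1B y w (Ne.symm hw)) _
      _ = K1 * ENNReal.ofReal (‖y - w‖ ^ (a + ϱ) * ‖w - x‖ ^ (b - (d:ℝ))) := by
          rw [ENNReal.ofReal_mul (Real.rpow_nonneg (norm_nonneg _) _)]
          ring
  have hae : ∀ᵐ w ∂(volume.restrict D), w ≠ y := by
    have hsub : {w : EuclideanSpace ℝ (Fin d) | ¬ w ≠ y} ⊆ {y} := fun w hw => by
      simpa using hw
    have h0 : (volume.restrict D) ({y} : Set (EuclideanSpace ℝ (Fin d))) = 0 :=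
      le_antisymm ((Measure.restrict_apply_le _ _).trans (measure_singleton y).le) zero_le
    exact ae_iff.2 (measure_mono_null hsub h0)
  calc (∫⁻ w in D, ∫⁻ z in D,
          ENNReal.ofReal (‖y - z‖ ^ (a - (d:ℝ)) * ‖z - w‖ ^ ϱ * ‖w - x‖ ^ (b - (d:ℝ))))
      ≤ ∫⁻ w in D, K1 * ENNReal.ofReal (‖y - w‖ ^ (a + ϱ) * ‖w - x‖ ^ (b - (d:ℝ))) := by
        refine lintegral_mono_ae ?_
        filter_upwards [hae] with w hw
        exact hinner w hw
    _ = K1 * ∫⁻ w in D, ENNReal.ofReal (‖y - w‖ ^ (a + ϱ) * ‖w - x‖ ^ (b - (d:ℝ))) :=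
        lintegral_const_mul' _ _ hK1
    _ ≤ K1 * ∫⁻ w, ENNReal.ofReal (‖y - w‖ ^ (a + ϱ) * ‖w - x‖ ^ (b - (d:ℝ))) :=
        mul_le_mul_right (lintegral_mono' Measure.restrict_le_self le_rfl) _
    _ ≤ K1 * (K2 * ENNReal.ofReal (‖y - x‖ ^ (a + ϱ + b))) :=
        mul_le_mul_right (hK2B y x (Ne.symm hxy)) _
    _ = (K1 * K2) * ENNReal.ofReal (‖y - x‖ ^ (a + ϱ + b)) := by rw [mul_assoc]
    _ ≤ ENNReal.ofReal ((K1 * K2).toReal + 1) * ENNReal.ofReal (‖y - x‖ ^ (a + ϱ + b)) := by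
        refine mul_le_mul_left ?_ _
        calc K1 * K2 = ENNReal.ofReal ((K1 * K2).toReal) := (ENNReal.ofReal_toReal hfin).symm
          _ ≤ ENNReal.ofReal ((K1 * K2).toReal + 1) := ENNReal.ofReal_le_ofReal (by linarith)
    _ = ENNReal.ofReal (((K1 * K2).toReal + 1) * ‖x - y‖ ^ (a + ϱ + b)) := by
        rw [← ENNReal.ofReal_mul (by positivity), norm_sub_rev y x]
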